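/- Let T ∈ ℝ with T < 0 and let c : (T, ∞) → (0, ∞) be a positive measurable function such that t ↦ c(t)e^{-t} is decreasing on (T, ∞) and ∫_{T₁}^{∞} c(t)e^{-t} dt < ∞ for some T₁ > T. Then there exists a positive measurable function c̃ on (T, ∞) satisfying: (1) c̃ ≥ c on (T, ∞); (2) t ↦ c̃(t)e^{-t} is strictly decreasing on (T, ∞) and c̃ is increasing on (a, ∞) for some a > T; (3) ∫_{T₁}^{∞} c̃(t)e^{-t} dt < ∞. -/

import Mathlib

open MeasureTheory Set

/-- Given a positive measurable function `c` on `(T, ∞)` with `c t * e^{-t}` decreasing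
and `∫_{T₁}^∞ c t e^{-t} dt < ∞` for some `T₁ > T`, there exists a positive measurable
function `c̃ ≥ c` on `(T, ∞)` such that `c̃ t * e^{-t}` is strictly decreasing on `(T, ∞)`,
`c̃` is increasing on some `(a, ∞)` with `a > T`, and `∫_{T₁}^∞ c̃ t e^{-t} dt < ∞`. -/
theorem stmt_1 (T T₁ : ℝ) (hT : T < 0) (hTT₁ : T < T₁) (c : ℝ → ℝ)
    (hc_meas : Measurable c)
    (hc_pos : ∀ t, T < t → 0 < c t)
    (hc_dec : AntitoneOn (fun t => c t * Real.exp (-t)) (Set.Ioi T))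
    (hc_int : IntegrableOn (fun t => c t * Real.exp (-t)) (Set.Ioi T₁)) :
    ∃ c' : ℝ → ℝ, Measurable c' ∧
      (∀ t, T < t → 0 < c' t) ∧
      (∀ t, T < t → c t ≤ c' t) ∧
      StrictAntiOn (fun t => c' t * Real.exp (-t)) (Set.Ioi T) ∧
      (∃ a : ℝ, T < a ∧ MonotoneOn c' (Set.Ioi a)) ∧
      IntegrableOn (fun t => c' t * Real.exp (-t)) (Set.Ioi T₁) := by
  set g : ℝ → ℝ := fun t => c t * Real.exp (-t) with hg_def
  have hg_meas : Measurable g := hc_meas.mul (Real.measurable_exp.comp measurable_neg)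
  have hg_pos : ∀ t, T < t → 0 < g t := fun t ht =>
    mul_pos (hc_pos t ht) (Real.exp_pos _)
  have hhalf : ∀ t : ℝ, T < t → T < t * 2⁻¹ := by
    intro t ht
    rcases le_or_gt 0 t with h | h
    · nlinarith
    · nlinarith
  have hgc : ∀ s : ℝ, g s * Real.exp s = c s := by
    intro s
    rw [hg_def]
    dsimp only
    rw [mul_assoc, ← Real.exp_add, show -s + s = 0 by ring, Real.exp_zero, mul_one]
  -- g is integrable on any Ioi a with T < a
  have hg_int' : ∀ a, T < a → IntegrableOn g (Set.Ioi a) := by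
    intro a ha
    have hab : a ≤ max a T₁ := le_max_left _ _
    rw [← Set.Ioc_union_Ioi_eq_Ioi hab]
    refine IntegrableOn.union ?_ (hc_int.mono_set (Set.Ioi_subset_Ioi (le_max_right _ _)))
    refine Measure.integrableOn_of_bounded (M := g a) measure_Ioc_lt_top.ne
      hg_meas.aestronglyMeasurable ?_
    filter_upwards [ae_restrict_mem measurableSet_Ioc] with t ht
    rw [Real.norm_eq_abs, abs_of_pos (hg_pos t (ha.trans ht.1))]
    exact hc_dec (Set.mem_Ioi.mpr ha) (Set.mem_Ioi.mpr (ha.trans ht.1)) ht.1.le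
  -- the running sup of c starting from 0
  set B : ℝ → ℝ := fun t => sSup (c '' Set.Icc 0 (max t 0)) with hB_def
  have hT0 : T < 0 := hT
  -- elements of the sup set are bounded
  have helt : ∀ t : ℝ, ∀ x ∈ c '' Set.Icc 0 (max t 0), x ≤ c 0 * Real.exp (max t 0) := by
    intro t x hx
    obtain ⟨s, hs, rfl⟩ := hx
    have hsT : T < s := lt_of_lt_of_le hT0 hs.1
    have h1 : g s ≤ g 0 := hc_dec (Set.mem_Ioi.mpr hT0) (Set.mem_Ioi.mpr hsT) hs.1
    have h2 : Real.exp s ≤ Real.exp (max t 0) := Real.exp_le_exp.mpr hs.2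
    rw [← hgc s]
    calc g s * Real.exp s ≤ g 0 * Real.exp (max t 0) := by
          apply mul_le_mul h1 h2 (Real.exp_pos _).le (hg_pos 0 hT0).le
      _ = c 0 * Real.exp (max t 0) := by simp [hg_def]
  have hBdd : ∀ t : ℝ, BddAbove (c '' Set.Icc 0 (max t 0)) :=
    fun t => ⟨c 0 * Real.exp (max t 0), fun x hx => helt t x hx⟩
  have hne : ∀ t : ℝ, (c '' Set.Icc 0 (max t 0)).Nonempty :=
    fun t => ⟨c 0, ⟨0, ⟨le_refl 0, le_max_right _ _⟩, rfl⟩⟩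
  have hB_mono : Monotone B := by
    intro t t' htt'
    exact csSup_le_csSup (hBdd t') (hne t)
      (Set.image_mono (Set.Icc_subset_Icc_right (max_le_max htt' le_rfl)))
  have hB_meas : Measurable B := hB_mono.measurable
  have hB_ge : ∀ t : ℝ, 0 ≤ t → c t ≤ B t := by
    intro t ht
    exact le_csSup (hBdd t) ⟨t, ⟨ht, le_max_left _ _⟩, rfl⟩
  have hB_ge0 : ∀ t : ℝ, c 0 ≤ B t := by
    intro t
    exact le_csSup (hBdd t) ⟨0, ⟨le_refl 0, le_max_right _ _⟩, rfl⟩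
  have hB_pos : ∀ t : ℝ, 0 < B t := fun t => lt_of_lt_of_le (hc_pos 0 hT0) (hB_ge0 t)
  -- key growth estimate
  have hB_key : ∀ t t' : ℝ, t ≤ t' → B t' ≤ B t * Real.exp (t' - t) := by
    intro t t' htt'
    apply csSup_le (hne t')
    rintro x ⟨s, hs, rfl⟩
    rcases le_or_gt s (max t 0) with hcase | hcase
    · have h1 : c s ≤ B t := le_csSup (hBdd t) ⟨s, ⟨hs.1, hcase⟩, rfl⟩
      have h2 : (1 : ℝ) ≤ Real.exp (t' - t) := by
        rw [← Real.exp_zero]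
        exact Real.exp_le_exp.mpr (by linarith)
      nlinarith [hB_pos t]
    · -- s > max t 0, so s > 0 hence s ≤ t'
      have hs0 : 0 < s := lt_of_le_of_lt (le_max_right t 0) hcase
      have hst' : s ≤ t' := by
        rcases max_cases t' 0 with ⟨h, _⟩ | ⟨h, h2⟩
        · rw [← h]; exact hs.2
        · linarith [hs.2]
      set u := max t 0 with hu_def
      have huT : T < u := lt_of_lt_of_le hT0 (le_max_right t 0)
      have hgu : g s ≤ g u := hc_dec (Set.mem_Ioi.mpr huT)
        (Set.mem_Ioi.mpr (huT.trans hcase)) hcase.le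
      have hcu : c u ≤ B t := le_csSup (hBdd t) ⟨u, ⟨le_max_right t 0, le_rfl⟩, rfl⟩
      have hut : t ≤ u := le_max_left t 0
      calc c s = g s * Real.exp s := (hgc s).symm
        _ ≤ g u * Real.exp t' := by
            apply mul_le_mul hgu (Real.exp_le_exp.mpr hst') (Real.exp_pos _).le
              (hg_pos u huT).le
        _ = (g u * Real.exp u) * Real.exp (t' - u) := by
            rw [show Real.exp t' = Real.exp u * Real.exp (t' - u) from by
              rw [← Real.exp_add, show u + (t' - u) = t' by ring]]
            ring
        _ = c u * Real.exp (t' - u) := by rw [hgc u]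
        _ ≤ B t * Real.exp (t' - t) := by
            apply mul_le_mul hcu (Real.exp_le_exp.mpr (by linarith)) (Real.exp_pos _).le
              (hB_pos t).le
  -- B t * exp (-t) is antitone
  have hBe_anti : ∀ t t' : ℝ, t ≤ t' → B t' * Real.exp (-t') ≤ B t * Real.exp (-t) := by
    intro t t' htt'
    calc B t' * Real.exp (-t') ≤ (B t * Real.exp (t' - t)) * Real.exp (-t') := by
          apply mul_le_mul_of_nonneg_right (hB_key t t' htt') (Real.exp_pos _).le
      _ = B t * Real.exp (-t) := by
          rw [mul_assoc, ← Real.exp_add, show t' - t + -t' = -t by ring]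
  -- bound used for integrability
  have hB_bound : ∀ t : ℝ, 0 ≤ t →
      B t ≤ c 0 * Real.exp (t * 2⁻¹) + g (t * 2⁻¹) * Real.exp t := by
    intro t ht
    apply csSup_le (hne t)
    rintro x ⟨s, hs, rfl⟩
    have hsmax : s ≤ t := le_trans hs.2 (by rw [max_eq_left ht])
    have hsT : T < s := lt_of_lt_of_le hT0 hs.1
    have hcs : c s = g s * Real.exp s := (hgc s).symm
    have ht2T : T < t * 2⁻¹ := lt_of_lt_of_le hT0 (by positivity)
    rcases le_or_gt s (t * 2⁻¹) with hcase | hcase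
    · have h1 : g s ≤ g 0 := hc_dec (Set.mem_Ioi.mpr hT0) (Set.mem_Ioi.mpr hsT) hs.1
      have h2 : Real.exp s ≤ Real.exp (t * 2⁻¹) := Real.exp_le_exp.mpr hcase
      have hg0 : g 0 = c 0 := by simp [hg_def]
      nlinarith [Real.exp_pos s, Real.exp_pos (t * 2⁻¹), hg_pos s hsT,
        mul_pos (hg_pos (t * 2⁻¹) ht2T) (Real.exp_pos t), hg_pos 0 hT0]
    · have h1 : g s ≤ g (t * 2⁻¹) := hc_dec (Set.mem_Ioi.mpr ht2T)
        (Set.mem_Ioi.mpr hsT) hcase.le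
      have h2 : Real.exp s ≤ Real.exp t := Real.exp_le_exp.mpr hsmax
      nlinarith [Real.exp_pos s, Real.exp_pos t, hg_pos s hsT,
        mul_pos (hc_pos 0 hT0) (Real.exp_pos (t * 2⁻¹))]
  -- B t = c 0 for t ≤ 0
  have hB_neg : ∀ t : ℝ, t ≤ 0 → B t = c 0 := by
    intro t ht
    rw [hB_def]
    simp only [max_eq_right ht, Set.Icc_self, Set.image_singleton, csSup_singleton]
  -- B t * exp (-t) is integrable on Ioi T₁
  have hBE : IntegrableOn (fun t => B t * Real.exp (-t)) (Set.Ioi T₁) := by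
    have hD : IntegrableOn (fun t => c 0 * Real.exp (-t) + c 0 * Real.exp (-(t * 2⁻¹))
        + g (t * 2⁻¹)) (Set.Ioi T₁) := by
      refine Integrable.add (Integrable.add ?_ ?_) ?_
      · have h1 : IntegrableOn (fun x : ℝ => Real.exp (-1 * x)) (Set.Ioi T₁) :=
          exp_neg_integrableOn_Ioi T₁ one_pos
        have h2 := Integrable.const_mul h1 (c 0)
        refine IntegrableOn.congr_fun h2 (fun t _ => by norm_num) measurableSet_Ioi
      · have h1 : IntegrableOn (fun x : ℝ => Real.exp (-2⁻¹ * x)) (Set.Ioi T₁) :=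
          exp_neg_integrableOn_Ioi T₁ (by norm_num)
        have h2 := Integrable.const_mul h1 (c 0)
        refine IntegrableOn.congr_fun h2 (fun t _ => by ring_nf) measurableSet_Ioi
      · have hT2 : T < T₁ * 2⁻¹ := by nlinarith
        exact (integrableOn_Ioi_comp_mul_right_iff g T₁ (by norm_num : (0:ℝ) < 2⁻¹)).mpr
          (hg_int' _ hT2)
    refine Integrable.mono' hD
      ((hB_meas.mul (Real.measurable_exp.comp measurable_neg)).aestronglyMeasurable) ?_
    filter_upwards [ae_restrict_mem measurableSet_Ioi] with t ht
    have htT : T < t := hTT₁.trans ht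
    have ht2T : T < t * 2⁻¹ := hhalf t htT
    rw [Real.norm_eq_abs, abs_of_pos (mul_pos (hB_pos t) (Real.exp_pos _))]
    rcases le_or_gt t 0 with hcase | hcase
    · rw [hB_neg t hcase]
      have h1 : 0 ≤ c 0 * Real.exp (-(t * 2⁻¹)) :=
        (mul_pos (hc_pos 0 hT0) (Real.exp_pos _)).le
      have h2 : 0 ≤ g (t * 2⁻¹) := (hg_pos _ ht2T).le
      linarith
    · have h1 := hB_bound t hcase.le
      have h2 : B t * Real.exp (-t) ≤
          (c 0 * Real.exp (t * 2⁻¹) + g (t * 2⁻¹) * Real.exp t) * Real.exp (-t) :=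
        mul_le_mul_of_nonneg_right h1 (Real.exp_pos _).le
      have h3 : (c 0 * Real.exp (t * 2⁻¹) + g (t * 2⁻¹) * Real.exp t) * Real.exp (-t)
          = c 0 * Real.exp (-(t * 2⁻¹)) + g (t * 2⁻¹) := by
        rw [add_mul, mul_assoc, mul_assoc, ← Real.exp_add, ← Real.exp_add,
          show t * 2⁻¹ + -t = -(t * 2⁻¹) by ring, show t + -t = 0 by ring,
          Real.exp_zero, mul_one]
      have h4 : 0 ≤ c 0 * Real.exp (-t) := (mul_pos (hc_pos 0 hT0) (Real.exp_pos _)).le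
      linarith [h2.trans_eq h3]
  -- the candidate function
  refine ⟨fun t => max (c t) (B t) + Real.exp (t * 2⁻¹), ?_, ?_, ?_, ?_, ?_, ?_⟩
  · exact (hc_meas.max hB_meas).add
      (Real.measurable_exp.comp (measurable_id.mul_const _))
  · intro t ht
    have := lt_of_lt_of_le (hc_pos t ht) (le_max_left (c t) (B t))
    linarith [Real.exp_pos (t * 2⁻¹)]
  · intro t ht
    have := le_max_left (c t) (B t)
    linarith [Real.exp_pos (t * 2⁻¹)]
  · -- strictly antitone
    intro t ht t' ht' htt'
    simp only
    rw [add_mul, add_mul]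
    have hmax : max (c t') (B t') * Real.exp (-t') ≤ max (c t) (B t) * Real.exp (-t) := by
      rw [max_mul_of_nonneg _ _ (Real.exp_pos (-t')).le,
        max_mul_of_nonneg _ _ (Real.exp_pos (-t)).le]
      exact max_le_max (hc_dec ht ht' htt'.le) (hBe_anti t t' htt'.le)
    have hexp : Real.exp (t' * 2⁻¹) * Real.exp (-t') < Real.exp (t * 2⁻¹) * Real.exp (-t) := by
      rw [← Real.exp_add, ← Real.exp_add]
      apply Real.exp_lt_exp.mpr
      linarith
    linarith
  · -- monotone on Ioi 0
    refine ⟨0, hT0, ?_⟩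
    intro t ht t' ht' htt'
    simp only
    rw [max_eq_right (hB_ge t (le_of_lt ht)), max_eq_right (hB_ge t' (le_of_lt ht'))]
    have h1 : B t ≤ B t' := hB_mono htt'
    have h2 : Real.exp (t * 2⁻¹) ≤ Real.exp (t' * 2⁻¹) := Real.exp_le_exp.mpr (by linarith)
    linarith
  · -- integrability
    have heq : ∀ t : ℝ, (max (c t) (B t) + Real.exp (t * 2⁻¹)) * Real.exp (-t)
        = max (c t) (B t) * Real.exp (-t) + Real.exp (-(t * 2⁻¹)) := by
      intro t
      rw [add_mul, ← Real.exp_add]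
      ring_nf
    simp only [heq]
    refine Integrable.add ?_ ?_
    · refine Integrable.mono' (hc_int.add hBE)
        (((hc_meas.max hB_meas).mul
          (Real.measurable_exp.comp measurable_neg)).aestronglyMeasurable) ?_
      filter_upwards [ae_restrict_mem measurableSet_Ioi] with t ht
      have htT : T < t := hTT₁.trans ht
      have h1 : 0 < c t * Real.exp (-t) := hg_pos t htT
      have h2 : 0 < B t * Real.exp (-t) := mul_pos (hB_pos t) (Real.exp_pos _)
      have hgt : g t = c t * Real.exp (-t) := rfl
      simp only [Pi.add_apply]
      rw [Real.norm_eq_abs, max_mul_of_nonneg _ _ (Real.exp_pos (-t)).le,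
        abs_of_pos (lt_max_of_lt_left h1)]
      exact max_le (by rw [hgt]; linarith) (by rw [hgt]; linarith)
    · have h1 : IntegrableOn (fun x : ℝ => Real.exp (-2⁻¹ * x)) (Set.Ioi T₁) :=
        exp_neg_integrableOn_Ioi T₁ (by norm_num)
      refine IntegrableOn.congr_fun h1 (fun t _ => by ring_nf) measurableSet_Ioi
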